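/- For all positive integers n and all 1 ≤ m ≤ n: ∑_{r=m}^{n} (r/n) · (n_[r]/n^r) · D_{r-m}/(r-m)! = (n_[m]/n^m) · (1 - 1/n)^{n-m}, where n_[r] is the falling factorial and D_k the derangement number. -/

import Mathlib

open Finset

/-- Derangement number `D k = k! * ∑_{j=0}^k (-1)^j/j!`, as a real number. -/
noncomputable def derNum (k : ℕ) : ℝ :=
  (k.factorial : ℝ) * ∑ j ∈ Finset.range (k + 1), (-1 : ℝ) ^ j / (j.factorial : ℝ)

lemma descFactorial_add_eq (n m j : ℕ) :
    n.descFactorial (m + j) = n.descFactorial m * (n - m).descFactorial j := by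
  induction j with
  | zero => simp
  | succ j ih =>
      rw [← Nat.add_assoc, Nat.descFactorial_succ, Nat.descFactorial_succ, ih, Nat.sub_sub]
      ring

lemma tele (g : ℕ → ℝ) (j : ℕ) :
    ∀ N, j ≤ N + 1 → ∑ s ∈ Icc j N, (g s - g (s + 1)) = g j - g (N + 1) := by
  intro N
  induction N with
  | zero =>
      intro h
      interval_cases j <;> simp
  | succ N ih =>
      intro h
      rcases Nat.lt_or_ge j (N + 2) with h' | h'
      · rw [Finset.sum_Icc_succ_top (by omega), ih (by omega)]
        ring
      · have : j = N + 2 := by omega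
        subst this
        simp

theorem stmt_1 (n m : ℕ) (hn : 1 ≤ n) (hm1 : 1 ≤ m) (hmn : m ≤ n) :
    ∑ r ∈ Finset.Icc m n,
        ((r : ℝ) / n) * ((n.descFactorial r : ℝ) / (n : ℝ) ^ r) *
          (derNum (r - m) / ((r - m).factorial : ℝ))
    = ((n.descFactorial m : ℝ) / (n : ℝ) ^ m) * (1 - 1 / (n : ℝ)) ^ (n - m) := by
  have hn0 : (n : ℝ) ≠ 0 := by positivity
  set N := n - m with hN
  have hmn' : m + N = n := by omega
  -- reindex Icc m n → range (N+1)
  rw [← Finset.Ico_add_one_right_eq_Icc, Finset.sum_Ico_eq_sum_range]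
  have hrange : n + 1 - m = N + 1 := by omega
  rw [hrange]
  -- expand derNum / factorial
  have hder : ∀ s : ℕ, derNum s / (s.factorial : ℝ)
      = ∑ j ∈ range (s + 1), (-1 : ℝ) ^ j / (j.factorial : ℝ) := by
    intro s
    have : (s.factorial : ℝ) ≠ 0 := by positivity
    rw [derNum, mul_div_cancel_left₀ _ this]
  have step1 :
      ∑ s ∈ range (N + 1),
        (((m + s : ℕ) : ℝ) / n) * ((n.descFactorial (m + s) : ℝ) / (n : ℝ) ^ (m + s)) *
          (derNum (m + s - m) / ((m + s - m).factorial : ℝ))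
      = ∑ j ∈ range (N + 1), ((-1 : ℝ) ^ j / (j.factorial : ℝ)) *
          ∑ s ∈ Icc j N,
            (((m + s : ℕ) : ℝ) / n) * ((n.descFactorial (m + s) : ℝ) / (n : ℝ) ^ (m + s)) := by
    simp only [Nat.add_sub_cancel_left, hder, Finset.mul_sum]
    rw [Finset.sum_comm' (t' := range (N + 1)) (s' := fun j => Icc j N)
      (by intro s j; simp only [mem_range, mem_Icc]; omega)]
    exact Finset.sum_congr rfl fun j _ => Finset.sum_congr rfl fun s _ => by ring
  rw [step1]
  -- telescoping: inner sum equals g j where g s = n_[m+s]/n^(m+s)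
  set g : ℕ → ℝ := fun s => (n.descFactorial (m + s) : ℝ) / (n : ℝ) ^ (m + s) with hg
  have hterm : ∀ s ∈ range (N + 1) , ∀ hs : m + s ≤ n,
      (((m + s : ℕ) : ℝ) / n) * ((n.descFactorial (m + s) : ℝ) / (n : ℝ) ^ (m + s))
        = g s - g (s + 1) := by
    intro s _ hs
    have hcast : ((n - (m + s) : ℕ) : ℝ) = (n : ℝ) - ((m + s : ℕ) : ℝ) := by
      push_cast [hs]; ring
    simp only [hg, ← Nat.add_assoc, Nat.descFactorial_succ, pow_succ]
    push_cast [hcast]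
    have hp : (n : ℝ) ^ (m + s) ≠ 0 := by positivity
    field_simp
    ring
  have htele : ∀ j ∈ range (N + 1),
      ∑ s ∈ Icc j N,
        (((m + s : ℕ) : ℝ) / n) * ((n.descFactorial (m + s) : ℝ) / (n : ℝ) ^ (m + s)) = g j := by
    intro j hj
    rw [mem_range] at hj
    rw [Finset.sum_congr rfl (fun s hs => hterm s (by rw [mem_range]; rw [mem_Icc] at hs; omega)
        (by rw [mem_Icc] at hs; omega)),
      tele g j N (by omega)]
    have : n.descFactorial (m + (N + 1)) = 0 := by
      apply Nat.descFactorial_eq_zero_iff_lt.2; omega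
    simp [hg, this]
  rw [Finset.sum_congr rfl fun j hj => by rw [htele j hj]]
  -- now use descFactorial_add and binomial theorem
  have hbin : (1 - 1 / (n : ℝ)) ^ N = ∑ j ∈ range (N + 1),
      (-1 / (n : ℝ)) ^ j * (N.choose j : ℝ) := by
    have := add_pow (-1 / (n : ℝ)) 1 N
    simp only [one_pow, mul_one] at this
    rw [show (1 : ℝ) - 1 / n = -1 / n + 1 by ring, this]
  rw [hN] at hbin ⊢
  rw [hbin, Finset.mul_sum]
  refine Finset.sum_congr rfl fun j hj => ?_
  rw [mem_range] at hj
  rw [hg]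
  simp only [descFactorial_add_eq n m j, Nat.descFactorial_eq_factorial_mul_choose (n - m) j]
  have hj0 : (j.factorial : ℝ) ≠ 0 := by positivity
  push_cast
  rw [pow_add]
  field_simp
  have hp : (n : ℝ) ^ j * ((n : ℝ)⁻¹) ^ j = 1 := by rw [← mul_pow, mul_inv_cancel₀ hn0, one_pow]
  linear_combination (-((n.descFactorial m : ℝ) * ((n - m).choose j : ℝ) * (-1 : ℝ) ^ j)) * hp
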